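/- If g, g' ∈ Λ_G with g ≈ g' (Λ_G-connected), and h ∈ Λ_G with g'h ∈ Λ_G, then g ≈ g'h. -/
import Mathlib


open Submodule

section
variable {G : Type*} [CommGroup G]

/-- A chain connection: a nonempty list `c` starting at `g`, with all entries in
`Main ∪ Other`, all proper partial products in `Main`, and total product `g'` or `g'⁻¹`. -/
def ChainConnected (Main Other : Set G) (g g' : G) : Prop :=
  ∃ c : List G, c ≠ [] ∧ c.head? = some g ∧
    (∀ k ∈ c, k ∈ Main ∪ Other) ∧
    (∀ i : ℕ, 0 < i → i < c.length → (c.take i).prod ∈ Main) ∧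
    (c.prod = g' ∨ c.prod = g'⁻¹)

end

/-- A `G`-graded Lie-Rinehart algebra `(L, A)` over a field `F`. -/
structure GradedLieRinehart (F : Type*) [Field F] (G : Type*) [CommGroup G] [DecidableEq G]
    (A : Type*) [CommRing A] [Algebra F A]
    (L : Type*) [LieRing L] [LieAlgebra F L] [Module A L] [IsScalarTower F A L] where
  ρ : L →ₗ[F] Derivation F A A
  ρ_smul : ∀ (a : A) (v : L) (b : A), ρ (a • v) b = a * ρ v b
  ρ_bracket : ∀ v w : L, ρ ⁅v, w⁆ = ⁅ρ v, ρ w⁆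
  leibniz : ∀ (v w : L) (a : A), ⁅v, a • w⁆ = a • ⁅v, w⁆ + (ρ v a) • w
  𝓛 : G → Submodule F L
  𝓐 : G → Submodule F A
  internalL : DirectSum.IsInternal 𝓛
  internalA : DirectSum.IsInternal 𝓐
  bracket_mem : ∀ {g h : G} {v w : L}, v ∈ 𝓛 g → w ∈ 𝓛 h → ⁅v, w⁆ ∈ 𝓛 (g * h)
  mul_mem : ∀ {g h : G} {a b : A}, a ∈ 𝓐 g → b ∈ 𝓐 h → a * b ∈ 𝓐 (g * h)
  smul_mem : ∀ {h g : G} {a : A} {v : L}, a ∈ 𝓐 h → v ∈ 𝓛 g → a • v ∈ 𝓛 (h * g)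
  rho_mem : ∀ {g h : G} {v : L} {a : A}, v ∈ 𝓛 g → a ∈ 𝓐 h → ρ v a ∈ 𝓐 (g * h)

namespace GradedLieRinehart

variable {F : Type*} [Field F] {G : Type*} [CommGroup G] [DecidableEq G]
  {A : Type*} [CommRing A] [Algebra F A]
  {L : Type*} [LieRing L] [LieAlgebra F L] [Module A L] [IsScalarTower F A L]
variable (𝔏 : GradedLieRinehart F G A L)

/-- The support `Σ_G` of the grading of `L`. -/
def SuppL : Set G := {g | g ≠ 1 ∧ 𝔏.𝓛 g ≠ ⊥}

/-- The support `Λ_G` of the grading of `A`. -/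
def SuppA : Set G := {g | g ≠ 1 ∧ 𝔏.𝓐 g ≠ ⊥}

/-- `Σ_G^± = Σ_G ∪ Σ_G⁻¹`. -/
def Spm : Set G := {g | g ∈ 𝔏.SuppL ∨ g⁻¹ ∈ 𝔏.SuppL}

/-- `Λ_G^± = Λ_G ∪ Λ_G⁻¹`. -/
def Lpm : Set G := {g | g ∈ 𝔏.SuppA ∨ g⁻¹ ∈ 𝔏.SuppA}

/-- `g` is `Σ_G`-connected to `g'`. -/
def SigmaConnected (g g' : G) : Prop := ChainConnected 𝔏.Spm 𝔏.Lpm g g'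

/-- `g` is `Λ_G`-connected to `g'`. -/
def LambdaConnected (g g' : G) : Prop := ChainConnected (𝔏.Lpm ∪ 𝔏.Spm) (∅ : Set G) g g'

/-- The span of products `A_h • L_g`. -/
def smulSub (h g : G) : Submodule F L :=
  Submodule.span F {x | ∃ a ∈ 𝔏.𝓐 h, ∃ v ∈ 𝔏.𝓛 g, x = a • v}

/-- The span of brackets `[L_h, L_g]`. -/
def bracketSub (h g : G) : Submodule F L :=
  Submodule.span F {x | ∃ v ∈ 𝔏.𝓛 h, ∃ w ∈ 𝔏.𝓛 g, x = ⁅v, w⁆}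

/-- `L_{[g],1}`. -/
def L1class (g : G) : Submodule F L :=
  (⨆ g' ∈ {g' | g' ∈ 𝔏.SuppL ∧ 𝔏.SigmaConnected g g' ∧ g' ∈ 𝔏.SuppA}, 𝔏.smulSub g'⁻¹ g') ⊔
  (⨆ g' ∈ {g' | g' ∈ 𝔏.SuppL ∧ 𝔏.SigmaConnected g g'}, 𝔏.bracketSub g'⁻¹ g')

/-- `V_{[g]}`. -/
def Vclass (g : G) : Submodule F L :=
  ⨆ g' ∈ {g' | g' ∈ 𝔏.SuppL ∧ 𝔏.SigmaConnected g g'}, 𝔏.𝓛 g'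

/-- The ideal `I_{[g]} = L_{[g],1} ⊕ V_{[g]}` attached to the class of `g`. -/
def Iclass (g : G) : Submodule F L := 𝔏.L1class g ⊔ 𝔏.Vclass g

/-- `Σ_{g ∈ Σ_G ∩ Λ_G} A_{g⁻¹} L_g + Σ_{g ∈ Σ_G} [L_{g⁻¹}, L_g]`. -/
def L1full : Submodule F L :=
  (⨆ g ∈ 𝔏.SuppL ∩ 𝔏.SuppA, 𝔏.smulSub g⁻¹ g) ⊔ (⨆ g ∈ 𝔏.SuppL, 𝔏.bracketSub g⁻¹ g)

/-- An ideal of the Lie-Rinehart algebra `(L,A)`: a Lie ideal which is an `A`-submodule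
and satisfies `ρ(I)(A)L ⊆ I`. -/
def IsIdealL (I : Submodule F L) : Prop :=
  (∀ (x : L), ∀ y ∈ I, ⁅x, y⁆ ∈ I) ∧ (∀ (a : A), ∀ y ∈ I, a • y ∈ I) ∧
  (∀ v ∈ I, ∀ (a : A) (w : L), (𝔏.ρ v a) • w ∈ I)

/-- A graded submodule of `L`. -/
def IsGradedL (I : Submodule F L) : Prop := I = ⨆ k : G, I ⊓ 𝔏.𝓛 k

/-- A graded ideal of `(L,A)`. -/
def IsGradedIdealL (I : Submodule F L) : Prop := 𝔏.IsIdealL I ∧ 𝔏.IsGradedL I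

/-- `(L,A)` is gr-simple. -/
def GrSimpleL : Prop :=
  (∃ v w : L, ⁅v, w⁆ ≠ 0) ∧ (∃ a b : A, a * b ≠ 0) ∧ (∃ (a : A) (v : L), a • v ≠ 0) ∧
  ∀ I : Submodule F L, 𝔏.IsGradedIdealL I → I = ⊥ ∨ I = ⊤ ∨ I = LinearMap.ker 𝔏.ρ

/-- The span of products `A_h · A_g`. -/
def mulSub (h g : G) : Submodule F A :=
  Submodule.span F {x | ∃ a ∈ 𝔏.𝓐 h, ∃ b ∈ 𝔏.𝓐 g, x = a * b}

/-- The span of `ρ(L_h)(A_g)`. -/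
def rhoSub (h g : G) : Submodule F A :=
  Submodule.span F {x | ∃ v ∈ 𝔏.𝓛 h, ∃ a ∈ 𝔏.𝓐 g, x = 𝔏.ρ v a}

/-- `A_{[g],1}`. -/
def A1class (g : G) : Submodule F A :=
  (⨆ g' ∈ {g' | g' ∈ 𝔏.SuppA ∧ 𝔏.LambdaConnected g g' ∧ g' ∈ 𝔏.SuppL}, 𝔏.rhoSub g'⁻¹ g') ⊔
  (⨆ g' ∈ {g' | g' ∈ 𝔏.SuppA ∧ 𝔏.LambdaConnected g g'}, 𝔏.mulSub g'⁻¹ g')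

/-- `A_{[g]}`. -/
def Aclass (g : G) : Submodule F A :=
  ⨆ g' ∈ {g' | g' ∈ 𝔏.SuppA ∧ 𝔏.LambdaConnected g g'}, 𝔏.𝓐 g'

/-- `𝒜_{[g]} = A_{[g],1} ⊕ A_{[g]}`. -/
def calA (g : G) : Submodule F A := 𝔏.A1class g ⊔ 𝔏.Aclass g

/-- `Σ_{g ∈ Λ_G ∩ Σ_G} ρ(L_{g⁻¹})(A_g) + Σ_{g ∈ Λ_G} A_{g⁻¹} A_g`. -/
def A1full : Submodule F A :=
  (⨆ g ∈ 𝔏.SuppA ∩ 𝔏.SuppL, 𝔏.rhoSub g⁻¹ g) ⊔ (⨆ g ∈ 𝔏.SuppA, 𝔏.mulSub g⁻¹ g)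

/-- An ideal of the commutative associative algebra `A`. -/
def IsIdealA (I : Submodule F A) : Prop := ∀ (a : A), ∀ x ∈ I, a * x ∈ I

/-- A graded submodule of `A`. -/
def IsGradedA (I : Submodule F A) : Prop := I = ⨆ k : G, I ⊓ 𝔏.𝓐 k

/-- A graded ideal of `A`. -/
def IsGradedIdealA (I : Submodule F A) : Prop := IsIdealA I ∧ 𝔏.IsGradedA I

/-- `A` is gr-simple. -/
def GrSimpleA : Prop :=
  (∃ a b : A, a * b ≠ 0) ∧
  ∀ I : Submodule F A, 𝔏.IsGradedIdealA I → I = ⊥ ∨ I = ⊤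

/-- The graded Lie-Rinehart algebra `(L,A)` is tight. -/
def Tight : Prop :=
  (∀ v : L, (∀ w : L, ⁅v, w⁆ = 0) → 𝔏.ρ v = 0 → v = 0) ∧
  (∀ v : L, (∀ a : A, a • v = 0) → v = 0) ∧
  (∀ a : A, (∀ b : A, a * b = 0) → a = 0) ∧
  Submodule.span F {x : A | ∃ b c : A, x = b * c} = ⊤ ∧
  Submodule.span F {x : L | ∃ (a : A) (w : L), x = a • w} = ⊤ ∧
  𝔏.𝓛 1 = 𝔏.L1full ∧ 𝔏.𝓐 1 = 𝔏.A1full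

/-- `(L,A)` is of maximal length. -/
def MaximalLength : Prop :=
  (∀ g ∈ 𝔏.SuppL, Module.rank F (𝔏.𝓛 g) = 1) ∧ (∀ k ∈ 𝔏.SuppA, Module.rank F (𝔏.𝓐 k) = 1)

/-- `(L,A)` is `G`-multiplicative. -/
def GMultiplicative : Prop :=
  (∀ g ∈ 𝔏.SuppL, ∀ h ∈ 𝔏.SuppL, g * h ∈ 𝔏.SuppL → ∃ v ∈ 𝔏.𝓛 g, ∃ w ∈ 𝔏.𝓛 h, ⁅v, w⁆ ≠ 0) ∧
  (∀ k ∈ 𝔏.SuppA, ∀ g ∈ 𝔏.SuppL, k * g ∈ 𝔏.SuppL → ∃ a ∈ 𝔏.𝓐 k, ∃ v ∈ 𝔏.𝓛 g, a • v ≠ 0) ∧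
  (∀ k ∈ 𝔏.SuppA, ∀ j ∈ 𝔏.SuppA, k * j ∈ 𝔏.SuppA → ∃ a ∈ 𝔏.𝓐 k, ∃ b ∈ 𝔏.𝓐 j, a * b ≠ 0)

/-- A gr-simple ideal of `(L,A)`: a graded ideal with nonzero bracket whose only graded
ideals of `L` contained in it are `0`, itself and its intersection with `Ker ρ`. -/
def GrSimpleIdealL (I : Submodule F L) : Prop :=
  𝔏.IsGradedIdealL I ∧ (∃ x ∈ I, ∃ y ∈ I, ⁅x, y⁆ ≠ 0) ∧
  ∀ J : Submodule F L, 𝔏.IsGradedIdealL J → J ≤ I →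
    (J = ⊥ ∨ J = I ∨ J = LinearMap.ker 𝔏.ρ ⊓ I)

end GradedLieRinehart

open GradedLieRinehart

variable {F : Type*} [Field F] {G : Type*} [CommGroup G] [DecidableEq G]
  {A : Type*} [CommRing A] [Algebra F A]
  {L : Type*} [LieRing L] [LieAlgebra F L] [Module A L] [IsScalarTower F A L]

/-- If `g ≈ g'` and `h, g'h ∈ Λ_G` then `g ≈ g'h`. -/
theorem lambda_class_mul_closed (𝔏 : GradedLieRinehart F G A L) {g g' h : G}
    (hg : g ∈ 𝔏.SuppA) (hg' : g' ∈ 𝔏.SuppA) (hconn : 𝔏.LambdaConnected g g')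
    (hh : h ∈ 𝔏.SuppA) (hmul : g' * h ∈ 𝔏.SuppA) :
    𝔏.LambdaConnected g (g' * h) := by
  obtain ⟨c, hne, hhead, hmem, hpart, hprod⟩ := hconn
  have hlen : 0 < c.length := List.length_pos_iff.mpr hne
  rcases hprod with hp | hp
  · refine ⟨c ++ [h], by simp, ?_, ?_, ?_, Or.inl ?_⟩
    · rcases c with _ | ⟨a, t⟩
      · exact absurd rfl hne
      · simpa using hhead
    · intro k hk
      rcases List.mem_append.mp hk with hk | hk
      · exact hmem k hk
      · simp only [List.mem_singleton] at hk
        subst hk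
        exact Or.inl (Or.inl (Or.inl hh))
    · intro i hi hilt
      simp only [List.length_append, List.length_singleton] at hilt
      have hile : i ≤ c.length := by omega
      rw [List.take_append_of_le_length hile]
      rcases lt_or_eq_of_le hile with hlt | heq
      · exact hpart i hi hlt
      · rw [heq, List.take_length, hp]
        exact Or.inl (Or.inl hg')
    · rw [List.prod_append, hp]; simp
  · refine ⟨c ++ [h⁻¹], by simp, ?_, ?_, ?_, Or.inr ?_⟩
    · rcases c with _ | ⟨a, t⟩
      · exact absurd rfl hne
      · simpa using hhead
    · intro k hk
      rcases List.mem_append.mp hk with hk | hk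
      · exact hmem k hk
      · simp only [List.mem_singleton] at hk
        subst hk
        exact Or.inl (Or.inl (Or.inr (by simpa using hh)))
    · intro i hi hilt
      simp only [List.length_append, List.length_singleton] at hilt
      have hile : i ≤ c.length := by omega
      rw [List.take_append_of_le_length hile]
      rcases lt_or_eq_of_le hile with hlt | heq
      · exact hpart i hi hlt
      · rw [heq, List.take_length, hp]
        exact Or.inl (Or.inr (by simpa using hg'))
    · rw [List.prod_append, hp]
      simp [mul_inv_rev, mul_comm]
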